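/- Let q be a real number with 0 < q < 1, let F be an odd positive integer, let a be an integer with 0 < a < F, and let n ≥ 1 be an integer. Then the Abel-regularized value of the partial Euler q-zeta function H_q(s,a;F) = ∑_{m≡a (mod F), m>0} (−1)^m/[m]_q^s at s = −n satisfies lim_{r→1⁻} ∑_{k=0}^∞ (−1)^{a+k} · r^k · [a+kF]_q^n = (−1)^a · [F]_q^n · E_{n,q^F}(a/F) / 2, where E_{n,q^F}(a/F) is the q^F-Euler polynomial evaluated at a/F. -/

import Mathlib

open Filter Finset Topology

/-- The `q`-Euler polynomial `E_{n,q}(x) = 2·(1/(1−q))^n · ∑_{j=0}^n C(n,j)·(−1)^j·q^{xj}/(1+q^j)`,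
where `q^{xj}` is a real power (`rpow`). -/
noncomputable def qEulerPoly (q : ℝ) (n : ℕ) (x : ℝ) : ℝ :=
  2 * (1/(1-q))^n *
    ∑ j ∈ Finset.range (n+1), (n.choose j : ℝ) * (-1)^j * q ^ (x * (j:ℝ)) / (1 + q^j)

/-- the Abel-regularized value of the partial Euler `q`-zeta function
`H_q(s,a;F)` at `s = −n`:
`lim_{r→1⁻} ∑_{k=0}^∞ (−1)^{a+k}·r^k·[a+kF]_q^n = (−1)^a·[F]_q^n·E_{n,q^F}(a/F)/2`
for odd `F`, `0 < a < F`, `n ≥ 1`. -/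
theorem partial_qZeta_neg_int (q : ℝ) (hq0 : 0 < q) (hq1 : q < 1)
    (F a : ℕ) (hF : Odd F) (ha0 : 0 < a) (haF : a < F) (n : ℕ) (hn : 1 ≤ n) :
    Tendsto (fun r : ℝ => ∑' k : ℕ, (-1:ℝ)^(a+k) * r^k * ((1 - q^(a + k*F))/(1-q))^n)
      (nhdsWithin (1:ℝ) (Set.Iio 1))
      (nhds ((-1:ℝ)^a * ((1 - q^F)/(1-q))^n * qEulerPoly (q^F) n ((a:ℝ)/(F:ℝ)) / 2)) := by
  have hF0 : (0:ℕ) < F := ha0.trans haF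
  have hqF1 : q ^ F < 1 := pow_lt_one₀ hq0.le hq1 hF0.ne'
  have hq' : (1:ℝ) - q ≠ 0 := by linarith
  have hqF' : (1:ℝ) - q^F ≠ 0 := by linarith
  set c : ℕ → ℝ := fun j =>
    (-1:ℝ)^a * (1/(1-q))^n * (n.choose j : ℝ) * (-1)^j * q^(a*j) with hc
  -- the finite-sum form
  have key : ∀ r : ℝ, |r| < 1 →
      (∑' k : ℕ, (-1:ℝ)^(a+k) * r^k * ((1 - q^(a + k*F))/(1-q))^n)
        = ∑ j ∈ Finset.range (n+1), c j * (1 + r * q^(F*j))⁻¹ := by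
    intro r hr
    have hx : ∀ j, ‖-(r * q^(F*j))‖ < 1 := by
      intro j
      have h1 : q ^ (F*j) ≤ 1 := pow_le_one₀ hq0.le hq1.le
      have h2 : |r * q^(F*j)| ≤ |r| := by
        rw [abs_mul, abs_of_pos (pow_pos hq0 _)]
        nlinarith [abs_nonneg r, pow_pos hq0 (F*j)]
      rw [norm_neg, Real.norm_eq_abs]
      exact h2.trans_lt hr
    have hterm : ∀ k : ℕ,
        (-1:ℝ)^(a+k) * r^k * ((1 - q^(a + k*F))/(1-q))^n
          = ∑ j ∈ Finset.range (n+1), c j * (-(r * q^(F*j)))^k := by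
      intro k
      have hbin : (1 - q^(a + k*F))^n
          = ∑ j ∈ Finset.range (n+1), (-(q^(a+k*F)))^j * (n.choose j : ℝ) := by
        have h := add_pow (-(q^(a+k*F))) (1:ℝ) n
        simp only [one_pow, mul_one] at h
        rw [show (1:ℝ) - q^(a+k*F) = -(q^(a+k*F)) + 1 by ring, h]
      rw [div_pow, hbin, Finset.sum_div, Finset.mul_sum]
      refine Finset.sum_congr rfl fun j _ => ?_
      have e0 : q ^ ((a + k*F)*j) = q^(a*j) * (q^(F*j))^k := by
        rw [← pow_mul, ← pow_add]
        congr 1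
        ring
      have e1 : (-(q^(a+k*F)))^j = (-1:ℝ)^j * (q^(a*j) * (q^(F*j))^k) := by
        rw [neg_pow, ← pow_mul, e0]
      have e2 : (-(r * q^(F*j)))^k = (-1:ℝ)^k * (r^k * (q^(F*j))^k) := by
        rw [neg_pow, mul_pow]
      simp only [hc, e1, e2, pow_add]
      field_simp
      have h1n : (1-q)⁻¹ ^ n * (1-q)^n = 1 := by rw [inv_pow, inv_mul_cancel₀ (pow_ne_zero n hq')]
      linear_combination (-(r ^ k * q ^ (k * F * j) * q ^ (a * j) * (n.choose j : ℝ) * (-1:ℝ) ^ j)) * h1n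
    rw [tsum_congr hterm]
    rw [Summable.tsum_finsetSum (fun j _ => by
      exact (summable_geometric_of_norm_lt_one (hx j)).mul_left (c j))]
    refine Finset.sum_congr rfl fun j _ => ?_
    rw [tsum_mul_left, tsum_geometric_of_norm_lt_one (hx j)]
    rw [sub_neg_eq_add]
  -- the limit of the finite-sum form
  have hlim : Tendsto (fun r : ℝ => ∑ j ∈ Finset.range (n+1), c j * (1 + r * q^(F*j))⁻¹)
      (nhdsWithin (1:ℝ) (Set.Iio 1))
      (nhds (∑ j ∈ Finset.range (n+1), c j * (1 + q^(F*j))⁻¹)) := by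
    refine tendsto_finset_sum _ fun j _ => ?_
    have hne : (1 : ℝ) + q^(F*j) ≠ 0 := by positivity
    have hcont : ContinuousAt (fun r : ℝ => c j * (1 + r * q^(F*j))⁻¹) 1 := by
      refine ContinuousAt.mul continuousAt_const (ContinuousAt.inv₀ (by fun_prop) ?_)
      simpa using hne
    simpa using hcont.continuousWithinAt.tendsto
  -- identify the limit value
  have hval : (∑ j ∈ Finset.range (n+1), c j * (1 + q^(F*j))⁻¹)
      = (-1:ℝ)^a * ((1 - q^F)/(1-q))^n * qEulerPoly (q^F) n ((a:ℝ)/(F:ℝ)) / 2 := by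
    rw [qEulerPoly, Finset.mul_sum, Finset.mul_sum, Finset.sum_div]
    refine Finset.sum_congr rfl fun j _ => ?_
    have h2 : (q^F : ℝ) ^ (((a:ℝ)/(F:ℝ)) * (j:ℝ)) = q^(a*j) := by
      rw [← Real.rpow_natCast q F, ← Real.rpow_mul hq0.le,
        show (F:ℝ) * (((a:ℝ)/(F:ℝ)) * (j:ℝ)) = ((a*j : ℕ) : ℝ) by
          push_cast
          field_simp,
        Real.rpow_natCast]
    have h3 : (q^F : ℝ)^j = q^(F*j) := by rw [← pow_mul]
    have hd : (1:ℝ) + q^(F*j) ≠ 0 := by positivity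
    simp only [hc, h2, h3]
    field_simp
    rw [mul_assoc (n.choose j : ℝ), ← mul_pow, div_mul_div_comm, mul_one,
      mul_comm (1 - q) (1 - q^F), ← div_div, div_self hqF']
    ring
  refine Tendsto.congr' ?_ (hval ▸ hlim)
  filter_upwards [Ioo_mem_nhdsLT_of_mem
    (show (1:ℝ) ∈ Set.Ioc (-1:ℝ) 1 from ⟨by norm_num, le_refl 1⟩)] with r hr
  exact (key r (abs_lt.mpr ⟨hr.1, hr.2⟩)).symm
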